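/- With weak Allee effect (M < 0), the equilibrium (0,0) of the system du/dτ = u(u+C)((u+A)(1-u)(u-M) - Qv), dv/dτ = S(u+A)(u - v + C)v is a repeller: the Jacobian at (0,0) has determinant -A²C²MS > 0 and trace -ACM + ACS > 0. -/

import Mathlib

open Matrix

/-- Jacobian matrix (via partial derivatives) of the vector field
`F(u,v) = (u(u+C)((u+A)(1-u)(u-M) - Qv), S(u+A)(u-v+C)v)` at the point `(a,b)`. -/
noncomputable def jac (A C M Q S a b : ℝ) : Matrix (Fin 2) (Fin 2) ℝ :=
  !![deriv (fun u => u * (u + C) * ((u + A) * (1 - u) * (u - M) - Q * b)) a,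
     deriv (fun v => a * (a + C) * ((a + A) * (1 - a) * (a - M) - Q * v)) b;
     deriv (fun u => S * (u + A) * (u - b + C) * b) a,
     deriv (fun v => S * (a + A) * (a - v + C) * v) b]

/-- With weak Allee effect (`M < 0`), the equilibrium `(0,0)` is a repeller:
the Jacobian there has determinant `-A²C²MS > 0` and trace `-ACM + ACS > 0`. -/
theorem stmt4 (A C M Q S : ℝ) (hA : 0 < A) (hA1 : A < 1) (hC : 0 < C)
    (hS : 0 < S) (hQ : 0 < Q) (hM : M < 0) :
    (jac A C M Q S 0 0).det = -A ^ 2 * C ^ 2 * M * S ∧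
    0 < -A ^ 2 * C ^ 2 * M * S ∧
    (jac A C M Q S 0 0).trace = -A * C * M + A * C * S ∧
    0 < -A * C * M + A * C * S := by
  have h00 : deriv (fun u : ℝ => u * (u + C) * ((u + A) * (1 - u) * (u - M) - Q * 0)) 0
      = -(A * C * M) := by
    have h : HasDerivAt (fun u : ℝ => u * (u + C) * ((u + A) * (1 - u) * (u - M) - Q * 0))
        (-(A * C * M)) 0 := by
      have := ((hasDerivAt_id (0:ℝ)).mul ((hasDerivAt_id (0:ℝ)).add_const C)).mul
        (((((hasDerivAt_id (0:ℝ)).add_const A).mul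
            ((hasDerivAt_const (0:ℝ) (1:ℝ)).sub (hasDerivAt_id 0))).mul
          ((hasDerivAt_id (0:ℝ)).sub_const M)).sub (hasDerivAt_const (0:ℝ) (Q * 0)))
      refine this.congr_deriv ?_
      simp; ring
    exact h.deriv
  have h01 : deriv (fun v : ℝ => 0 * (0 + C) * ((0 + A) * (1 - 0) * (0 - M) - Q * v)) 0
      = 0 := by
    simp
  have h10 : deriv (fun u : ℝ => S * (u + A) * (u - 0 + C) * 0) 0 = 0 := by
    simp
  have h11 : deriv (fun v : ℝ => S * (0 + A) * (0 - v + C) * v) 0 = A * C * S := by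
    have h : HasDerivAt (fun v : ℝ => S * (0 + A) * (0 - v + C) * v) (A * C * S) 0 := by
      have := ((hasDerivAt_const (0:ℝ) (S * (0 + A))).mul
        (((hasDerivAt_const (0:ℝ) (0:ℝ)).sub (hasDerivAt_id 0)).add_const C)).mul
        (hasDerivAt_id (0:ℝ))
      refine this.congr_deriv ?_
      simp; ring
    exact h.deriv
  have hdet : (jac A C M Q S 0 0).det = -A ^ 2 * C ^ 2 * M * S := by
    simp only [jac, Matrix.det_fin_two_of, h00, h01, h10, h11]
    ring
  have htr : (jac A C M Q S 0 0).trace = -A * C * M + A * C * S := by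
    simp only [jac, Matrix.trace_fin_two_of, h00, h01, h10, h11]
    ring
  refine ⟨hdet, ?_, htr, ?_⟩
  · have h : -A ^ 2 * C ^ 2 * M * S = A ^ 2 * C ^ 2 * (-M) * S := by ring
    rw [h]
    have hm : 0 < -M := by linarith
    positivity
  · nlinarith [mul_pos hA hC, mul_pos hS (mul_pos hA hC)]
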